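/- Let I ⊆ K[x_1,...,x_n] be a graded ideal generated in degree d. If I has linear quotients, then I has a linear resolution. -/

import Mathlib

open MvPolynomial

/-- The linear combination map `S^s → S`, `g ↦ ∑ j, g j * f j`. -/
noncomputable def combMap {S : Type*} [CommRing S] {s : ℕ} (f : Fin s → S) :
    (Fin s → S) →ₗ[S] S where
  toFun g := ∑ j, g j * f j
  map_add' a b := by simp [add_mul, Finset.sum_add_distrib]
  map_smul' c a := by simp [Finset.mul_sum, mul_assoc]

/-- The map of free modules `S^a → S^b` given by a matrix `A`. -/
noncomputable def matMap {S : Type*} [CommRing S] {a b : ℕ} (A : Fin a → Fin b → S) :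
    (Fin a → S) →ₗ[S] (Fin b → S) where
  toFun g := fun k => ∑ j, g j * A j k
  map_add' x y := by funext k; simp [add_mul, Finset.sum_add_distrib]
  map_smul' c x := by funext k; simp [Finset.mul_sum, mul_assoc]

/-- An ideal is generated by homogeneous elements of degree 1 (linear forms). -/
def DegOneGen {K : Type*} [CommRing K] {n : ℕ}
    (J : Ideal (MvPolynomial (Fin n) K)) : Prop :=
  ∃ T : Set (MvPolynomial (Fin n) K),
    (∀ g ∈ T, g.IsHomogeneous 1) ∧ J = Ideal.span T

/-- `I` has a `d`-linear (free) resolution: there is an exact complex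
`⋯ → S(-d-2)^{b 2} → S(-d-1)^{b 1} → S(-d)^{b 0} → I → 0` in which the generators of
`S(-d)^{b 0}` map to homogeneous elements of degree `d` generating `I` and all the
matrices of the resolution have entries homogeneous of degree 1. -/
def HasLinearResolution {K : Type*} [Field K] {n : ℕ}
    (I : Ideal (MvPolynomial (Fin n) K)) (d : ℕ) : Prop :=
  ∃ (b : ℕ → ℕ) (f : Fin (b 0) → MvPolynomial (Fin n) K)
    (A : (i : ℕ) → Fin (b (i + 1)) → Fin (b i) → MvPolynomial (Fin n) K),
    (∀ j, (f j).IsHomogeneous d) ∧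
    (∀ i j k, (A i j k).IsHomogeneous 1) ∧
    Ideal.span (Set.range f) = I ∧
    LinearMap.ker (combMap f) = LinearMap.range (matMap (A 0)) ∧
    ∀ i, LinearMap.ker (matMap (A i)) = LinearMap.range (matMap (A (i + 1)))

/-- `I` has linear quotients: its minimal homogeneous generators (all of degree `d`)
can be ordered so that each successive colon ideal is generated in degree 1. -/
def HasLinearQuotients {K : Type*} [CommRing K] {n : ℕ}
    (I : Ideal (MvPolynomial (Fin n) K)) (d : ℕ) : Prop :=
  ∃ (s : ℕ) (f : Fin s → MvPolynomial (Fin n) K),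
    (∀ i, (f i).IsHomogeneous d) ∧
    Ideal.span (Set.range f) = I ∧
    (∀ i, f i ∉ Ideal.span (f '' {j | j ≠ i})) ∧
    ∀ i : Fin s, 0 < (i : ℕ) →
      DegOneGen ((Ideal.span (f '' {j | (j : ℕ) < (i : ℕ)})).colon (Ideal.span {f i}))

namespace LQLR

section PartB
variable {K : Type*} [Field K] {n : ℕ}

theorem homogComp_mul (p q : MvPolynomial (Fin n) K) (e dq : ℕ)
    (hq : q.IsHomogeneous dq) :
    homogeneousComponent (e + dq) (p * q) = homogeneousComponent e p * q := by
  conv_lhs => rw [← sum_homogeneousComponent p]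
  rw [Finset.sum_mul, map_sum]
  have hterm : ∀ i, homogeneousComponent (e + dq) (homogeneousComponent i p * q)
      = if e = i then homogeneousComponent i p * q else 0 := by
    intro i
    have hh : (homogeneousComponent i p * q).IsHomogeneous (i + dq) :=
      (homogeneousComponent_isHomogeneous i p).mul hq
    rw [homogeneousComponent_of_mem hh]
    by_cases h : e = i
    · subst h; simp
    · rw [if_neg (by omega), if_neg h]
  rw [Finset.sum_congr rfl (fun i _ => hterm i), Finset.sum_ite_eq]
  by_cases h : e ∈ Finset.range (p.totalDegree + 1)
  · rw [if_pos h]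
  · rw [if_neg h]
    have h0 : homogeneousComponent e p = 0 := by
      apply homogeneousComponent_eq_zero
      simp only [Finset.mem_range, not_lt] at h
      omega
    rw [h0, zero_mul]

theorem isHomog_of_isHomog (p : MvPolynomial (Fin n) K) {e : ℕ} (hp : p.IsHomogeneous e) :
    homogeneousComponent e p = p := by
  rw [homogeneousComponent_of_mem hp, if_pos rfl]

theorem exists_homog_lift_matMap {a b : ℕ} (A : Fin a → Fin b → MvPolynomial (Fin n) K)
    (dA : ℕ) (hA : ∀ j k, (A j k).IsHomogeneous dA) {v : Fin b → MvPolynomial (Fin n) K}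
    (e : ℕ) (hv : ∀ k, (v k).IsHomogeneous (e + dA))
    (hmem : v ∈ LinearMap.range (matMap A)) :
    ∃ w, (∀ j, (w j).IsHomogeneous e) ∧ matMap A w = v := by
  obtain ⟨w0, hw0⟩ := hmem
  refine ⟨fun j => homogeneousComponent e (w0 j),
    fun j => homogeneousComponent_isHomogeneous e (w0 j), ?_⟩
  funext k
  have step : ∀ j : Fin a, homogeneousComponent e (w0 j) * A j k
      = homogeneousComponent (e + dA) (w0 j * A j k) :=
    fun j => (homogComp_mul (w0 j) (A j k) e dA (hA j k)).symm
  calc (matMap A fun j => homogeneousComponent e (w0 j)) k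
      = ∑ j, homogeneousComponent e (w0 j) * A j k := rfl
    _ = ∑ j, homogeneousComponent (e + dA) (w0 j * A j k) :=
        Finset.sum_congr rfl (fun j _ => step j)
    _ = homogeneousComponent (e + dA) (∑ j, w0 j * A j k) := (map_sum _ _ _).symm
    _ = homogeneousComponent (e + dA) (matMap A w0 k) := rfl
    _ = homogeneousComponent (e + dA) (v k) := by rw [hw0]
    _ = v k := isHomog_of_isHomog _ (hv k)

theorem exists_homog_lift_span {s : ℕ} (f : Fin s → MvPolynomial (Fin n) K) (d : ℕ)
    (hf : ∀ j, (f j).IsHomogeneous d) {p : MvPolynomial (Fin n) K} (e : ℕ)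
    (hp : p.IsHomogeneous (e + d)) (hmem : p ∈ Ideal.span (Set.range f)) :
    ∃ g, (∀ j, (g j).IsHomogeneous e) ∧ combMap f g = p := by
  obtain ⟨g0, hg0⟩ := Ideal.mem_span_range_iff_exists_fun.mp hmem
  refine ⟨fun j => homogeneousComponent e (g0 j),
    fun j => homogeneousComponent_isHomogeneous e (g0 j), ?_⟩
  have step : ∀ j : Fin s, homogeneousComponent e (g0 j) * f j
      = homogeneousComponent (e + d) (g0 j * f j) :=
    fun j => (homogComp_mul (g0 j) (f j) e d (hf j)).symm
  calc (combMap f fun j => homogeneousComponent e (g0 j))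
      = ∑ j, homogeneousComponent e (g0 j) * f j := rfl
    _ = ∑ j, homogeneousComponent (e + d) (g0 j * f j) :=
        Finset.sum_congr rfl (fun j _ => step j)
    _ = homogeneousComponent (e + d) (∑ j, g0 j * f j) := (map_sum _ _ _).symm
    _ = homogeneousComponent (e + d) p := by rw [hg0]
    _ = p := isHomog_of_isHomog _ hp

/-- Linear form associated to a coefficient vector. -/
noncomputable def ofVecL : (Fin n → K) →ₗ[K] MvPolynomial (Fin n) K where
  toFun w := ∑ i, C (w i) * X i
  map_add' a b := by simp [add_mul, Finset.sum_add_distrib]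
  map_smul' c a := by
    simp only [Pi.smul_apply, smul_eq_mul, map_mul, RingHom.id_apply, smul_eq_C_mul,
      Finset.mul_sum, mul_assoc]

noncomputable def toVecL : MvPolynomial (Fin n) K →ₗ[K] (Fin n → K) where
  toFun p := fun i => coeff (Finsupp.single i 1) p
  map_add' a b := by funext i; simp [coeff_add]
  map_smul' c a := by funext i; simp [coeff_smul]

theorem ofVecL_isHomog (w : Fin n → K) : (ofVecL w : MvPolynomial (Fin n) K).IsHomogeneous 1 := by
  apply IsHomogeneous.sum
  intro i _
  exact isHomogeneous_C_mul_X _ _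

theorem toVec_ofVec (w : Fin n → K) : toVecL (ofVecL w : MvPolynomial (Fin n) K) = w := by
  funext i
  classical
  simp only [ofVecL, toVecL, LinearMap.coe_mk, AddHom.coe_mk, coeff_sum, coeff_C_mul, coeff_X']
  simp only [Finsupp.single_left_inj (one_ne_zero : (1 : ℕ) ≠ 0)]
  simp

theorem ofVecL_injective : Function.Injective (ofVecL : (Fin n → K) →ₗ[K] _) := by
  intro a b h
  have := congrArg toVecL h
  rwa [toVec_ofVec, toVec_ofVec] at this

theorem finsupp_degree_one {μ : Fin n →₀ ℕ} (h : μ.degree = 1) :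
    ∃ i, μ = Finsupp.single i 1 := by
  classical
  have hne : μ.support.Nonempty := by
    by_contra hc
    rw [Finset.not_nonempty_iff_eq_empty] at hc
    rw [Finsupp.degree_apply, hc] at h
    simp at h
  obtain ⟨i, hi⟩ := hne
  refine ⟨i, ?_⟩
  have hile : μ i ≤ 1 := by
    rw [← h, Finsupp.degree_apply]
    exact Finset.single_le_sum (fun _ _ => Nat.zero_le _) hi
  have hipos : 1 ≤ μ i := Nat.one_le_iff_ne_zero.mpr (Finsupp.mem_support_iff.mp hi)
  have hii : μ i = 1 := le_antisymm hile hipos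
  ext j
  by_cases hji : j = i
  · subst hji; simp [hii]
  · rw [Finsupp.single_apply, if_neg (Ne.symm hji)]
    by_contra hc
    have hjs : j ∈ μ.support := Finsupp.mem_support_iff.mpr hc
    have hsub : ({i, j} : Finset (Fin n)) ⊆ μ.support := by
      intro x hx
      simp only [Finset.mem_insert, Finset.mem_singleton] at hx
      rcases hx with rfl | rfl <;> assumption
    have : 2 ≤ μ.degree := by
      rw [Finsupp.degree_apply]
      calc 2 = 1 + 1 := rfl
        _ ≤ μ i + μ j := by
            have := Nat.one_le_iff_ne_zero.mpr hc
            omega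
        _ = ∑ x ∈ ({i, j} : Finset (Fin n)), μ x := by
            rw [Finset.sum_insert (by simp [Ne.symm hji]), Finset.sum_singleton]
        _ ≤ ∑ x ∈ μ.support, μ x := Finset.sum_le_sum_of_subset hsub
    omega

theorem ofVec_toVec {p : MvPolynomial (Fin n) K} (hp : p.IsHomogeneous 1) :
    (ofVecL (toVecL p) : MvPolynomial (Fin n) K) = p := by
  classical
  apply MvPolynomial.ext
  intro μ
  simp only [ofVecL, toVecL, LinearMap.coe_mk, AddHom.coe_mk, coeff_sum, coeff_C_mul, coeff_X']
  by_cases hμ : ∃ i, μ = Finsupp.single i 1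
  · obtain ⟨i, rfl⟩ := hμ
    simp only [Finsupp.single_left_inj (one_ne_zero : (1 : ℕ) ≠ 0)]
    simp
  · have h0 : coeff μ p = 0 := by
      apply hp.coeff_eq_zero
      intro hc
      exact hμ (finsupp_degree_one hc)
    rw [h0]
    push_neg at hμ
    apply Finset.sum_eq_zero
    intro j _
    rw [if_neg (fun hc => hμ j hc.symm), mul_zero]

theorem spanK_le_ideal (T : Set (MvPolynomial (Fin n) K)) :
    ∀ x ∈ Submodule.span K T, x ∈ Ideal.span T := by
  intro x hx
  induction hx using Submodule.span_induction with
  | mem y hy => exact Ideal.subset_span hy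
  | zero => exact (Ideal.span T).zero_mem
  | add a b _ _ ha hb => exact (Ideal.span T).add_mem ha hb
  | smul c a _ ha =>
      rw [smul_eq_C_mul]
      exact Ideal.mul_mem_left _ _ ha

theorem colon_linear {r : ℕ} (u : Fin (r + 1) → MvPolynomial (Fin n) K)
    (hu : ∀ t, (u t).IsHomogeneous 1) (hind : LinearIndependent K u) :
    ∀ p : MvPolynomial (Fin n) K,
      p * u (Fin.last r) ∈ Ideal.span (Set.range (u ∘ Fin.castSucc)) →
      p ∈ Ideal.span (Set.range (u ∘ Fin.castSucc)) := by
  classical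
  set J := Ideal.span (Set.range (u ∘ Fin.castSucc)) with hJ
  set uh : Fin (r + 1) → (Fin n → K) := fun t => toVecL (u t) with huh
  have hrec : ∀ t, (ofVecL (uh t) : MvPolynomial (Fin n) K) = u t :=
    fun t => ofVec_toVec (hu t)
  have hindh : LinearIndependent K uh := by
    apply LinearIndependent.of_comp (ofVecL : (Fin n → K) →ₗ[K] MvPolynomial (Fin n) K)
    have : (ofVecL : (Fin n → K) →ₗ[K] MvPolynomial (Fin n) K) ∘ uh = u := funext hrec
    rw [this]; exact hind
  have hsnoc : uh = Fin.snoc (uh ∘ Fin.castSucc) (uh (Fin.last r)) := by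
    funext t
    refine Fin.lastCases ?_ (fun j => ?_) t
    · rw [Fin.snoc_last]
    · rw [Fin.snoc_castSucc]; rfl
  have hlast : uh (Fin.last r) ∉ Submodule.span K (Set.range (uh ∘ Fin.castSucc)) := by
    rw [hsnoc] at hindh
    exact (linearIndependent_fin_snoc.mp hindh).2
  set U := Submodule.span K (Set.range (uh ∘ Fin.castSucc)) with hU
  obtain ⟨W, hW⟩ := Submodule.exists_isCompl U
  set π : (Fin n → K) →ₗ[K] (Fin n → K) :=
    W.subtype ∘ₗ (W.projectionOnto U hW.symm) with hπ
  have hπU : ∀ x ∈ U, π x = 0 := by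
    intro x hx
    simp only [hπ, LinearMap.comp_apply]
    rw [Submodule.projectionOnto_apply_of_mem_right hW.symm hx]
    rfl
  have hπsub : ∀ x, x - π x ∈ U := by
    intro x
    have hx : x ∈ W ⊔ U := by rw [hW.symm.sup_eq_top]; trivial
    obtain ⟨w, hw, v, hv, rfl⟩ := Submodule.mem_sup.mp hx
    have : π (w + v) = w := by
      rw [map_add, hπU v hv, add_zero, hπ]
      simp only [LinearMap.comp_apply]
      rw [show w = ((⟨w, hw⟩ : W) : Fin n → K) from rfl,
        Submodule.projectionOnto_apply_left hW.symm]
      rfl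
    rw [this]
    simpa using hv
  have hπlast : π (uh (Fin.last r)) ≠ 0 := by
    intro hc
    apply hlast
    have : uh (Fin.last r) ∈ LinearMap.ker π := hc
    have hker : LinearMap.ker π = U := by
      rw [hπ, LinearMap.ker_comp, Submodule.ker_subtype, Submodule.comap_bot]
      exact Submodule.ker_projectionOnto hW.symm
    rwa [hker] at this
  set φ : MvPolynomial (Fin n) K →ₐ[K] MvPolynomial (Fin n) K :=
    aeval (fun i => (ofVecL (π (Pi.single i 1)) : MvPolynomial (Fin n) K)) with hφ
  have φlin : ∀ w : Fin n → K, φ (ofVecL w) = ofVecL (π w) := by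
    intro w
    have expand : (ofVecL w : MvPolynomial (Fin n) K) = ∑ i, C (w i) * X i := rfl
    rw [expand, map_sum]
    have term : ∀ i, φ (C (w i) * X i)
        = (ofVecL (π (w i • (Pi.single i 1 : Fin n → K))) : MvPolynomial (Fin n) K) := by
      intro i
      rw [map_mul, hφ, aeval_C, aeval_X, algebraMap_eq, map_smul, map_smul, smul_eq_C_mul]
    rw [Finset.sum_congr rfl (fun i _ => term i)]
    have hwsum : (∑ i, w i • (Pi.single i 1 : Fin n → K)) = w := by
      funext j
      rw [Finset.sum_apply]
      simp [Pi.single_apply]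
    rw [← map_sum, ← map_sum, hwsum]
  have hkill : ∀ t : Fin r, φ (u (Fin.castSucc t)) = 0 := by
    intro t
    rw [← hrec (Fin.castSucc t), φlin]
    have : uh (Fin.castSucc t) ∈ U := by
      apply Submodule.subset_span
      exact ⟨t, rfl⟩
    rw [hπU _ this, map_zero]
  have hlast' : φ (u (Fin.last r)) ≠ 0 := by
    rw [← hrec (Fin.last r), φlin]
    intro hc
    apply hπlast
    have := congrArg toVecL hc
    rwa [toVec_ofVec, map_zero] at this
  have hsub : ∀ p : MvPolynomial (Fin n) K, p - φ p ∈ J := by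
    intro p
    induction p using MvPolynomial.induction_on with
    | C a => rw [hφ, aeval_C, algebraMap_eq, sub_self]; exact J.zero_mem
    | add p q hp hq =>
        have : p + q - φ (p + q) = (p - φ p) + (q - φ q) := by
          rw [map_add]; ring
        rw [this]; exact J.add_mem hp hq
    | mul_X p i hp =>
        have key : (X i : MvPolynomial (Fin n) K) - φ (X i) ∈ J := by
          rw [hφ, aeval_X]
          have hXi : (X i : MvPolynomial (Fin n) K) = ofVecL (Pi.single i 1) := by
            simp only [ofVecL, LinearMap.coe_mk, AddHom.coe_mk]
            rw [Finset.sum_eq_single i]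
            · simp
            · intro j _ hji
              rw [Pi.single_eq_of_ne hji, map_zero, zero_mul]
            · intro hc; exact absurd (Finset.mem_univ i) hc
          rw [hXi, ← map_sub]
          have hmem : Pi.single i 1 - π (Pi.single i 1) ∈ U := hπsub _
          have : (ofVecL (Pi.single i 1 - π (Pi.single i 1)) : MvPolynomial (Fin n) K)
              ∈ Submodule.span K (Set.range (u ∘ Fin.castSucc)) := by
            have himg : Submodule.map (ofVecL : (Fin n → K) →ₗ[K] _) U
                ≤ Submodule.span K (Set.range (u ∘ Fin.castSucc)) := by
              rw [hU, Submodule.map_span]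
              apply Submodule.span_le.mpr
              rintro x ⟨y, ⟨t, rfl⟩, rfl⟩
              apply Submodule.subset_span
              exact ⟨t, (hrec (Fin.castSucc t)).symm⟩
            exact himg ⟨_, hmem, rfl⟩
          exact spanK_le_ideal _ _ this
        have : p * X i - φ (p * X i) = p * (X i - φ (X i)) + (p - φ p) * φ (X i) := by
          rw [map_mul]; ring
        rw [this]
        exact J.add_mem (Ideal.mul_mem_left _ _ key) (Ideal.mul_mem_right _ _ hp)
  have hker : ∀ q ∈ J, φ q = 0 := by
    intro q hq
    have hle : J ≤ RingHom.ker (φ : MvPolynomial (Fin n) K →+* MvPolynomial (Fin n) K) := by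
      rw [hJ]
      apply Ideal.span_le.mpr
      rintro x ⟨t, rfl⟩
      exact hkill t
    exact hle hq
  intro p hp
  have h0 : φ p * φ (u (Fin.last r)) = 0 := by
    rw [← map_mul]; exact hker _ hp
  have hφp : φ p = 0 := by
    rcases mul_eq_zero.mp h0 with h | h
    · exact h
    · exact absurd h hlast'
  have := hsub p
  rwa [hφp, sub_zero] at this

theorem degOneGen_basis (J : Ideal (MvPolynomial (Fin n) K)) (h : DegOneGen J) :
    ∃ (r : ℕ) (u : Fin r → MvPolynomial (Fin n) K),
      (∀ t, (u t).IsHomogeneous 1) ∧ LinearIndependent K u ∧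
        Ideal.span (Set.range u) = J := by
  obtain ⟨T, hT, rfl⟩ := h
  classical
  set V' : Submodule K (Fin n → K) := Submodule.span K (toVecL '' T) with hV'
  have : FiniteDimensional K V' := inferInstance
  set b := Module.finBasis K V' with hb
  refine ⟨Module.finrank K V', fun t => ofVecL ((b t : Fin n → K)), ?_, ?_, ?_⟩
  · intro t; exact ofVecL_isHomog _
  · have hcomp : (fun t => (ofVecL ((b t : Fin n → K)) : MvPolynomial (Fin n) K))
        = (ofVecL ∘ₗ V'.subtype) ∘ b := rfl
    rw [hcomp]
    apply b.linearIndependent.map'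
    rw [LinearMap.ker_eq_bot]
    exact ofVecL_injective.comp (Submodule.injective_subtype V')
  · apply le_antisymm
    · apply Ideal.span_le.mpr
      rintro x ⟨t, rfl⟩
      have hmem : (b t : Fin n → K) ∈ V' := (b t).2
      have himg : (ofVecL ((b t : Fin n → K)) : MvPolynomial (Fin n) K)
          ∈ Submodule.map (ofVecL : (Fin n → K) →ₗ[K] _) V' := ⟨_, hmem, rfl⟩
      have himg2 : (ofVecL ((b t : Fin n → K)) : MvPolynomial (Fin n) K)
          ∈ Submodule.span K ((ofVecL : (Fin n → K) →ₗ[K] _) '' (toVecL '' T)) := by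
        rw [← Submodule.map_span]
        exact himg
      have : Submodule.span K ((ofVecL : (Fin n → K) →ₗ[K] _) '' (toVecL '' T))
          ≤ Submodule.span K T := by
        apply Submodule.span_le.mpr
        rintro y ⟨z, ⟨g, hg, rfl⟩, rfl⟩
        have : (ofVecL (toVecL g) : MvPolynomial (Fin n) K) = g := ofVec_toVec (hT g hg)
        rw [this]
        exact Submodule.subset_span hg
      exact spanK_le_ideal _ _ (this himg2)
    · apply Ideal.span_le.mpr
      intro g hg
      have hginv : (ofVecL (toVecL g) : MvPolynomial (Fin n) K) = g := ofVec_toVec (hT g hg)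
      have hmem : toVecL g ∈ V' := Submodule.subset_span ⟨g, hg, rfl⟩
      set gv : V' := ⟨toVecL g, hmem⟩ with hgv
      have hrepr : gv = ∑ t, (b.repr gv) t • b t := (b.sum_repr gv).symm
      have : g = ∑ t, (b.repr gv) t • (ofVecL ((b t : Fin n → K)) : MvPolynomial (Fin n) K) := by
        rw [← hginv]
        have := congrArg (fun x : V' => (ofVecL ((x : Fin n → K)) : MvPolynomial (Fin n) K)) hrepr
        rw [show toVecL g = ((gv : V') : Fin n → K) from rfl, this]
        rw [show ((∑ t, (b.repr gv) t • b t : V') : Fin n → K)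
          = ∑ t, (b.repr gv) t • ((b t : V') : Fin n → K) by
            rw [Submodule.coe_sum]; simp]
        rw [map_sum]
        simp
      rw [this]
      apply Submodule.sum_mem
      intro t _
      apply spanK_le_ideal
      exact Submodule.smul_mem _ _ (Submodule.subset_span ⟨t, rfl⟩)



end PartB

section PartA
variable {S : Type*} [CommRing S]

theorem combMap_apply {s : ℕ} (f : Fin s → S) (g : Fin s → S) :
    combMap f g = ∑ j, g j * f j := rfl

theorem matMap_apply {a b : ℕ} (A : Fin a → Fin b → S) (g : Fin a → S) (k : Fin b) :
    matMap A g k = ∑ j, g j * A j k := rfl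

theorem matMap_comp {a b c : ℕ} (A : Fin a → Fin b → S) (B : Fin b → Fin c → S)
    (v : Fin a → S) :
    matMap B (matMap A v) = matMap (fun t => matMap B (A t)) v := by
  funext k
  simp only [matMap_apply, Finset.sum_mul, Finset.mul_sum]
  rw [Finset.sum_comm]
  simp [mul_assoc]

theorem combMap_matMap {a b : ℕ} (A : Fin a → Fin b → S) (g : Fin b → S)
    (v : Fin a → S) :
    combMap g (matMap A v) = combMap (fun t => combMap g (A t)) v := by
  simp only [combMap_apply, matMap_apply, Finset.sum_mul, Finset.mul_sum]
  rw [Finset.sum_comm]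
  simp [mul_assoc]

theorem matMap_negMat {a b : ℕ} (A : Fin a → Fin b → S) (v : Fin a → S) :
    matMap (fun t => -(A t)) v = -(matMap A v) := by
  funext k
  simp [matMap_apply]

/-- The iterated mapping cone block matrix `[[P 0],[ψ Q]]` (rows indexed by source
basis). -/
def coneMat {a1 a2 b0 b1 : ℕ} (P : Fin a2 → Fin a1 → S) (ψ : Fin b1 → Fin a1 → S)
    (Q : Fin b1 → Fin b0 → S) : Fin (a2 + b1) → Fin (a1 + b0) → S :=
  Fin.addCases (fun j => Fin.append (P j) 0) (fun t => Fin.append (ψ t) (Q t))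

theorem matMap_coneMat_left {a1 a2 b0 b1 : ℕ} (P : Fin a2 → Fin a1 → S)
    (ψ : Fin b1 → Fin a1 → S) (Q : Fin b1 → Fin b0 → S) (x : Fin (a2 + b1) → S)
    (c : Fin a1) :
    matMap (coneMat P ψ Q) x (Fin.castAdd b0 c)
      = matMap P (x ∘ Fin.castAdd b1) c + matMap ψ (x ∘ Fin.natAdd a2) c := by
  simp [matMap_apply, coneMat, Fin.sum_univ_add, Function.comp]

theorem matMap_coneMat_right {a1 a2 b0 b1 : ℕ} (P : Fin a2 → Fin a1 → S)
    (ψ : Fin b1 → Fin a1 → S) (Q : Fin b1 → Fin b0 → S) (x : Fin (a2 + b1) → S)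
    (c : Fin b0) :
    matMap (coneMat P ψ Q) x (Fin.natAdd a1 c) = matMap Q (x ∘ Fin.natAdd a2) c := by
  simp [matMap_apply, coneMat, Fin.sum_univ_add, Function.comp]

/-- One-column matrix with entries `g`. -/
def colMat {s : ℕ} (g : Fin s → S) : Fin s → Fin 1 → S := fun j _ => g j

theorem matMap_colMat {s : ℕ} (g : Fin s → S) (x : Fin s → S) (c : Fin 1) :
    matMap (colMat g) x c = combMap g x := rfl

theorem ker_matMap_colMat {s : ℕ} (g : Fin s → S) :
    LinearMap.ker (matMap (colMat g)) = LinearMap.ker (combMap g) := by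
  ext x
  simp only [LinearMap.mem_ker]
  constructor
  · intro h
    have := congrFun h 0
    simpa [matMap_colMat] using this
  · intro h
    funext c
    simpa [matMap_colMat] using h

theorem cone_exact_step {a1 a2 a3 b0 b1 b2 : ℕ}
    (P1 : Fin a2 → Fin a1 → S) (P2 : Fin a3 → Fin a2 → S)
    (Q0 : Fin b1 → Fin b0 → S) (Q1 : Fin b2 → Fin b1 → S)
    (ψB : Fin b1 → Fin a1 → S) (ψC : Fin b2 → Fin a2 → S)
    (hF : LinearMap.ker (matMap P1) = LinearMap.range (matMap P2))
    (hG1 : ∀ xF xG, matMap P1 xF + matMap ψB xG = 0 → matMap Q0 xG = 0 →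
      ∃ yG, matMap Q1 yG = xG)
    (hG2 : ∀ yG, matMap Q0 (matMap Q1 yG) = 0)
    (rel : ∀ t, matMap P1 (ψC t) = - matMap ψB (Q1 t)) :
    LinearMap.ker (matMap (coneMat P1 ψB Q0))
      = LinearMap.range (matMap (coneMat P2 ψC Q1)) := by
  have comp1 : ∀ wG : Fin b2 → S,
      matMap P1 (matMap ψC wG) = - matMap ψB (matMap Q1 wG) := by
    intro wG
    rw [matMap_comp ψC P1, matMap_comp Q1 ψB]
    have hmat : (fun t => matMap P1 (ψC t)) = fun t => -(matMap ψB (Q1 t)) :=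
      funext rel
    rw [hmat, matMap_negMat]
  ext x
  simp only [LinearMap.mem_ker, LinearMap.mem_range]
  constructor
  · intro hx
    set xF := x ∘ Fin.castAdd b1 with hxFdef
    set xG := x ∘ Fin.natAdd a2 with hxGdef
    have hxF : matMap P1 xF + matMap ψB xG = 0 := by
      funext c
      have := congrFun hx (Fin.castAdd b0 c)
      rw [matMap_coneMat_left] at this
      simpa using this
    have hxG : matMap Q0 xG = 0 := by
      funext c
      have := congrFun hx (Fin.natAdd a1 c)
      rw [matMap_coneMat_right] at this
      simpa using this
    obtain ⟨yG, hyG⟩ := hG1 xF xG hxF hxG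
    have key : matMap P1 (xF - matMap ψC yG) = 0 := by
      rw [map_sub, comp1, hyG, sub_neg_eq_add, hxF]
    have : xF - matMap ψC yG ∈ LinearMap.range (matMap P2) := by
      rw [← hF]; exact key
    obtain ⟨w, hw⟩ := this
    refine ⟨Fin.append w yG, ?_⟩
    have hL : (Fin.append w yG) ∘ Fin.castAdd b2 = w := by
      funext j; simp [Function.comp]
    have hR : (Fin.append w yG) ∘ Fin.natAdd a3 = yG := by
      funext j; simp [Function.comp]
    funext col
    refine Fin.addCases (fun c => ?_) (fun c => ?_) col
    · rw [matMap_coneMat_left, hL, hR]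
      have h1 := congrFun hw c
      simp only [Pi.sub_apply] at h1
      rw [h1, sub_add_cancel]
      rfl
    · rw [matMap_coneMat_right, hR]
      exact congrFun hyG c
  · rintro ⟨w, rfl⟩
    set wF := w ∘ Fin.castAdd b2 with hwF
    set wG := w ∘ Fin.natAdd a3 with hwG
    have hUF : (matMap (coneMat P2 ψC Q1) w) ∘ Fin.castAdd b1
        = matMap P2 wF + matMap ψC wG := by
      funext c; rw [Function.comp_apply, matMap_coneMat_left]; simp [hwF, hwG]
    have hUG : (matMap (coneMat P2 ψC Q1) w) ∘ Fin.natAdd a2 = matMap Q1 wG := by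
      funext c; rw [Function.comp_apply, matMap_coneMat_right]
    have hker : matMap P1 (matMap P2 wF) = 0 := by
      have : matMap P2 wF ∈ LinearMap.ker (matMap P1) := by
        rw [hF]; exact ⟨wF, rfl⟩
      exact this
    funext col
    refine Fin.addCases (fun c => ?_) (fun c => ?_) col
    · rw [matMap_coneMat_left, hUF, hUG, map_add, hker, zero_add, comp1]
      simp
    · rw [matMap_coneMat_right, hUG, hG2]
      rfl


end PartA

section Scaffold
variable {S : Type*} [CommRing S]

theorem matMap_single {a b : ℕ} (A : Fin a → Fin b → S) (t : Fin a) :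
    matMap A (Pi.single t 1) = A t := by
  funext k
  rw [matMap_apply, Finset.sum_eq_single t]
  · simp
  · intro j _ hj
    rw [Pi.single_eq_of_ne hj, zero_mul]
  · intro hc; exact absurd (Finset.mem_univ t) hc

/-- Numbers of generators in the augmented resolution: level 0 is the rank-1 free
module, level 1 the generators, level `k+2` the syzygy counts. -/
@[reducible] def resNumE (s : ℕ) (c : ℕ → ℕ) : ℕ → ℕ
  | 0 => 1
  | 1 => s
  | (k+2) => c k

/-- Matrices of the augmented resolution. -/
def resMatE {s : ℕ} {c : ℕ → ℕ} (f : Fin s → S) (A0 : Fin (c 0) → Fin s → S)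
    (A : ∀ i, Fin (c (i+1)) → Fin (c i) → S) :
    ∀ k, Fin (resNumE s c (k+1)) → Fin (resNumE s c k) → S
  | 0 => colMat f
  | 1 => A0
  | (k+2) => A k

theorem resMatE_exact {s : ℕ} {c : ℕ → ℕ} (f : Fin s → S) (A0 : Fin (c 0) → Fin s → S)
    (A : ∀ i, Fin (c (i+1)) → Fin (c i) → S)
    (e0 : LinearMap.ker (combMap f) = LinearMap.range (matMap A0))
    (e1 : LinearMap.ker (matMap A0) = LinearMap.range (matMap (A 0)))
    (e : ∀ i, LinearMap.ker (matMap (A i)) = LinearMap.range (matMap (A (i+1)))) :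
    ∀ k, LinearMap.ker (matMap (resMatE f A0 A k))
      = LinearMap.range (matMap (resMatE f A0 A (k+1)))
  | 0 => by
      show LinearMap.ker (matMap (colMat f)) = LinearMap.range (matMap A0)
      rw [ker_matMap_colMat, e0]
  | 1 => e1
  | (k+2) => e k

end Scaffold

section LinResDef
variable {K : Type*} [Field K] {n : ℕ}

/-- A linear free resolution of the cokernel presentation given by `f`. -/
def LinRes {s : ℕ} (f : Fin s → MvPolynomial (Fin n) K) : Prop :=
  ∃ (c : ℕ → ℕ) (A0 : Fin (c 0) → Fin s → MvPolynomial (Fin n) K)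
    (A : ∀ i, Fin (c (i+1)) → Fin (c i) → MvPolynomial (Fin n) K),
    (∀ j k, (A0 j k).IsHomogeneous 1) ∧ (∀ i j k, (A i j k).IsHomogeneous 1) ∧
    LinearMap.ker (combMap f) = LinearMap.range (matMap A0) ∧
    LinearMap.ker (matMap A0) = LinearMap.range (matMap (A 0)) ∧
    ∀ i, LinearMap.ker (matMap (A i)) = LinearMap.range (matMap (A (i+1)))

theorem linRes_of_inj {s : ℕ} (f : Fin s → MvPolynomial (Fin n) K)
    (h : ∀ x, combMap f x = 0 → x = 0) : LinRes f := by
  refine ⟨fun _ => 0, fun j _ => 0, fun i j _ => 0, fun j => j.elim0, fun i j => j.elim0,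
    ?_, ?_, fun i => ?_⟩
  · ext x
    simp only [LinearMap.mem_ker, LinearMap.mem_range]
    constructor
    · intro hx
      refine ⟨0, ?_⟩
      rw [map_zero, h x hx]
    · rintro ⟨y, rfl⟩
      have hy : matMap (fun (j : Fin 0) (_ : Fin s) => (0 : MvPolynomial (Fin n) K)) y = 0 := by
        funext k
        rw [matMap_apply]
        exact Finset.sum_of_isEmpty _
      rw [hy, map_zero]
  · ext x
    simp only [LinearMap.mem_ker, LinearMap.mem_range]
    constructor
    · intro _
      exact ⟨x, funext fun j => j.elim0⟩
    · intro _
      funext k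
      rw [matMap_apply]
      exact Finset.sum_of_isEmpty _
  · ext x
    simp only [LinearMap.mem_ker, LinearMap.mem_range]
    constructor
    · intro _
      exact ⟨x, funext fun j => j.elim0⟩
    · intro _
      funext k
      rw [matMap_apply]
      exact Finset.sum_of_isEmpty _

theorem linRes_empty (f : Fin 0 → MvPolynomial (Fin n) K) : LinRes f :=
  linRes_of_inj f (fun x _ => funext fun j => j.elim0)

theorem linRes_single (f : Fin 1 → MvPolynomial (Fin n) K) (hf : f 0 ≠ 0) : LinRes f := by
  apply linRes_of_inj
  intro x hx
  have : x 0 * f 0 = 0 := by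
    rw [combMap_apply, Fin.sum_univ_one] at hx
    exact hx
  rcases mul_eq_zero.mp this with h | h
  · funext j
    rw [Subsingleton.elim j 0, h]
    rfl
  · exact absurd h hf

end LinResDef

theorem exists_chain {T : ℕ → Sort*} (P : ∀ k, T k → Prop) (R : ∀ k, T k → T (k+1) → Prop)
    (a0 : T 0) (h0 : P 0 a0) (hs : ∀ k a, P k a → ∃ b, P (k+1) b ∧ R k a b) :
    ∃ g : ∀ k, T k, g 0 = a0 ∧ (∀ k, P k (g k)) ∧ ∀ k, R k (g k) (g (k+1)) := by
  choose b hb hR using hs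
  let g : ∀ k, {a : T k // P k a} := fun k =>
    Nat.rec ⟨a0, h0⟩ (fun k p => ⟨b k p.1 p.2, hb k p.1 p.2⟩) k
  exact ⟨fun k => (g k).1, rfl, fun k => (g k).2, fun k => hR k (g k).1 (g k).2⟩

section Cone
variable {K : Type*} [Field K] {n : ℕ}

theorem isHomog_neg {p : MvPolynomial (Fin n) K} {e : ℕ} (h : p.IsHomogeneous e) :
    (-p).IsHomogeneous e :=
  (homogeneousSubmodule (Fin n) K e).neg_mem h

theorem combMap_mem_span {s : ℕ} (g : Fin s → MvPolynomial (Fin n) K)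
    (x : Fin s → MvPolynomial (Fin n) K) :
    combMap g x ∈ Ideal.span (Set.range g) := by
  rw [combMap_apply]
  exact Ideal.sum_mem _ fun j _ => Ideal.mul_mem_left _ _ (Ideal.subset_span ⟨j, rfl⟩)

theorem coneMat_isHomog {a1 a2 b0 b1 : ℕ}
    {P : Fin a2 → Fin a1 → MvPolynomial (Fin n) K}
    {ψ : Fin b1 → Fin a1 → MvPolynomial (Fin n) K}
    {Q : Fin b1 → Fin b0 → MvPolynomial (Fin n) K}
    (hP : ∀ j k, (P j k).IsHomogeneous 1) (hψ : ∀ j k, (ψ j k).IsHomogeneous 1)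
    (hQ : ∀ j k, (Q j k).IsHomogeneous 1) :
    ∀ j k, ((coneMat P ψ Q) j k).IsHomogeneous 1 := by
  intro j
  refine Fin.addCases (motive := fun j => ∀ k, ((coneMat P ψ Q) j k).IsHomogeneous 1)
    (fun jF => ?_) (fun jG => ?_) j
  · intro k
    refine Fin.addCases
      (motive := fun k => ((coneMat P ψ Q) (Fin.castAdd b1 jF) k).IsHomogeneous 1)
      (fun c => ?_) (fun c => ?_) k
    · simpa [coneMat] using hP jF c
    · simpa [coneMat] using isHomogeneous_zero (Fin n) K 1
  · intro k
    refine Fin.addCases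
      (motive := fun k => ((coneMat P ψ Q) (Fin.natAdd a2 jG) k).IsHomogeneous 1)
      (fun c => ?_) (fun c => ?_) k
    · simpa [coneMat] using hψ jG c
    · simpa [coneMat] using hQ jG c

theorem linRes_cone {d m r : ℕ} (f : Fin (m + 1) → MvPolynomial (Fin n) K)
    (hf : ∀ j, (f j).IsHomogeneous d)
    (u : Fin r → MvPolynomial (Fin n) K) (hu : ∀ t, (u t).IsHomogeneous 1)
    (hcol : ∀ a : MvPolynomial (Fin n) K,
      a * f (Fin.last m) ∈ Ideal.span (Set.range (f ∘ Fin.castSucc)) ↔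
        a ∈ Ideal.span (Set.range u))
    (hF : LinRes (f ∘ Fin.castSucc)) (hG : LinRes u) : LinRes f := by
  classical
  obtain ⟨cF, A0F, AF, hA0F, hAF, eF0, eF1, eF⟩ := hF
  obtain ⟨cG, A0G, AG, hA0G, hAG, eG0, eG1, eG⟩ := hG
  set fp : Fin m → MvPolynomial (Fin n) K := f ∘ Fin.castSucc with hfp
  set FE := resMatE fp A0F AF with hFEdef
  set GE := resMatE u A0G AG with hGEdef
  have EF : ∀ k, LinearMap.ker (matMap (FE k)) = LinearMap.range (matMap (FE (k + 1))) :=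
    resMatE_exact fp A0F AF eF0 eF1 eF
  have EG : ∀ k, LinearMap.ker (matMap (GE k)) = LinearMap.range (matMap (GE (k + 1))) :=
    resMatE_exact u A0G AG eG0 eG1 eG
  -- degrees of the entries of the augmented F-complex
  set edeg : ℕ → ℕ := fun k => Nat.rec d (fun _ _ => 1) k with hedeg
  have hFEdeg : ∀ k j l, (FE k j l).IsHomogeneous (edeg k) := by
    intro k
    match k with
    | 0 => exact fun j l => hf (Fin.castSucc j)
    | 1 => exact hA0F
    | (k + 2) => exact hAF k
  have hGEdeg : ∀ k j l, (GE k j l).IsHomogeneous 1 := by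
    intro k
    match k with
    | 0 => exact fun j l => hu j
    | 1 => exact hA0G
    | (k + 2) => exact hAG k
  -- the comparison maps Θ
  set T : ℕ → Type _ :=
    fun k => Fin (resNumE r cG k) → Fin (resNumE m cF k) → MvPolynomial (Fin n) K with hT
  set ψneg1 : T 0 := fun _ _ => f (Fin.last m) with hψneg1
  set P : ∀ k, T k → Prop := fun k M =>
    (∀ t j, (M t j).IsHomogeneous (edeg k)) ∧
    (∀ t : Fin (resNumE r cG (k + 1)),
      -((matMap M) (GE k t)) ∈ LinearMap.range (matMap (FE k))) with hP
  set R : ∀ k, T k → T (k + 1) → Prop := fun k M M' =>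
    ∀ t, matMap (FE k) (M' t) = -((matMap M) (GE k t)) with hR
  have hψneg1val : ∀ (v : Fin (resNumE r cG 0) → MvPolynomial (Fin n) K)
      (c : Fin (resNumE m cF 0)),
      matMap ψneg1 v c = v ⟨0, Nat.one_pos⟩ * f (Fin.last m) := by
    intro v c
    show (∑ j : Fin 1, v j * f (Fin.last m)) = v ⟨0, Nat.one_pos⟩ * f (Fin.last m)
    rw [Fin.sum_univ_one]
    rfl
  have hGE0row : ∀ (t : Fin r) (j : Fin (resNumE r cG 0)), GE 0 t j = u t := fun _ _ => rfl
  have base : P 0 ψneg1 := by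
    constructor
    · intro t j
      exact hf (Fin.last m)
    · intro t
      have hval : -((matMap ψneg1) (GE 0 t)) = fun _ => -(u t * f (Fin.last m)) := by
        funext c
        rw [Pi.neg_apply, hψneg1val, hGE0row]
      have hmem : -(u t * f (Fin.last m)) ∈ Ideal.span (Set.range fp) := by
        apply neg_mem
        exact (hcol (u t)).mpr (Ideal.subset_span ⟨t, rfl⟩)
      obtain ⟨g, hg⟩ := Ideal.mem_span_range_iff_exists_fun.mp hmem
      refine ⟨g, ?_⟩
      rw [hval]
      funext c
      rw [show (matMap (FE 0)) g c = combMap fp g from rfl, combMap_apply, hg]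
  have step : ∀ k M, P k M → ∃ M', P (k + 1) M' ∧ R k M M' := by
    intro k M hM
    obtain ⟨hMhom, hMIR⟩ := hM
    have lift : ∀ t : Fin (resNumE r cG (k + 1)),
        ∃ w, (∀ j, (w j).IsHomogeneous 1) ∧ matMap (FE k) w = -((matMap M) (GE k t)) := by
      intro t
      apply exists_homog_lift_matMap (FE k) (edeg k) (hFEdeg k) 1 ?_ (hMIR t)
      intro l
      apply isHomog_neg
      rw [matMap_apply]
      apply IsHomogeneous.sum
      intro t' _
      exact (hGEdeg k t t').mul (hMhom t' l)
    choose w hw1 hw2 using lift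
    refine ⟨w, ⟨hw1, ?_⟩, hw2⟩
    intro t
    rw [← EF k]
    show matMap (FE k) (-((matMap w) (GE (k + 1) t))) = 0
    rw [map_neg, matMap_comp]
    have hcongr : (fun t' => matMap (FE k) (w t')) = fun t' => -((matMap M) (GE k t')) :=
      funext hw2
    rw [hcongr, matMap_negMat, ← matMap_comp]
    have hz : matMap (GE k) (GE (k + 1) t) = 0 := by
      have hrow : GE (k + 1) t ∈ LinearMap.range (matMap (GE (k + 1))) :=
        ⟨Pi.single t 1, matMap_single _ t⟩
      rw [← EG k] at hrow
      exact hrow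
    rw [hz, map_zero, neg_zero, neg_zero]
  obtain ⟨Θ, hΘ0, hΘP, hΘR⟩ := exists_chain P R ψneg1 base step
  -- bottom: kernel of the cone bottom matrix is the kernel of combMap f
  set Qnil : Fin (resNumE r cG 0) → Fin 0 → MvPolynomial (Fin n) K := fun _ x => x.elim0
    with hQnil
  have hcastAdd : ∀ (x : Fin (m + 1) → MvPolynomial (Fin n) K),
      x ∘ Fin.castAdd 1 = x ∘ Fin.castSucc := fun x => rfl
  have hbotval : ∀ (x : Fin (m + 1) → MvPolynomial (Fin n) K)
      (c : Fin (resNumE m cF 0 + 0)),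
      matMap (coneMat (FE 0) (Θ 0) Qnil) x c = combMap f x := by
    intro x c
    refine Fin.addCases (motive := fun c =>
      matMap (coneMat (FE 0) (Θ 0) Qnil) x c = combMap f x) (fun c0 => ?_)
      (fun c0 => c0.elim0) c
    show matMap (coneMat (FE 0) (Θ 0) Qnil) x (Fin.castAdd 0 c0) = combMap f x
    rw [matMap_coneMat_left, hΘ0, hψneg1val]
    rw [combMap_apply, Fin.sum_univ_castSucc]
    rfl
  have hbotker : LinearMap.ker (matMap (coneMat (FE 0) (Θ 0) Qnil))
      = LinearMap.ker (combMap f) := by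
    ext x
    simp only [LinearMap.mem_ker]
    constructor
    · intro h
      have := congrFun h (⟨0, Nat.one_pos⟩ : Fin (resNumE m cF 0 + 0))
      rwa [hbotval] at this
    · intro h
      funext c
      rw [hbotval, h]
      rfl
  have EX0 : LinearMap.ker (matMap (coneMat (FE 0) (Θ 0) Qnil))
      = LinearMap.range (matMap (coneMat (FE 1) (Θ 1) (GE 0))) := by
    apply cone_exact_step (FE 0) (FE 1) Qnil (GE 0) (Θ 0) (Θ 1) (EF 0) ?_ ?_ (hΘR 0)
    · intro xF xG h1 _
      have fin1G : ∀ c : Fin (resNumE r cG 0), c = ⟨0, Nat.one_pos⟩ := by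
        intro c
        apply Fin.ext
        show (c : ℕ) = 0
        have hlt : (c : ℕ) < 1 := c.isLt
        omega
      have h0 := congrFun h1 (⟨0, Nat.one_pos⟩ : Fin (resNumE m cF 0))
      rw [Pi.add_apply, Pi.zero_apply, hΘ0, hψneg1val,
        show (matMap (FE 0)) xF ⟨0, Nat.one_pos⟩ = combMap fp xF from rfl] at h0
      have hv : xG ⟨0, Nat.one_pos⟩ * f (Fin.last m) = -(combMap fp xF) := by
        linear_combination h0
      have hmem : xG ⟨0, Nat.one_pos⟩ ∈ Ideal.span (Set.range u) := by
        apply (hcol _).mp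
        rw [hv]
        exact neg_mem (combMap_mem_span fp xF)
      obtain ⟨yG, hyG⟩ := Ideal.mem_span_range_iff_exists_fun.mp hmem
      refine ⟨yG, ?_⟩
      funext c
      rw [show (matMap (GE 0)) yG c = combMap u yG from rfl, combMap_apply, hyG, fin1G c]
    · intro yG
      funext c
      exact c.elim0
  have EX1 : ∀ k, LinearMap.ker (matMap (coneMat (FE (k + 1)) (Θ (k + 1)) (GE k)))
      = LinearMap.range (matMap (coneMat (FE (k + 2)) (Θ (k + 2)) (GE (k + 1)))) := by
    intro k
    apply cone_exact_step _ _ _ _ _ _ (EF (k + 1)) ?_ ?_ (hΘR (k + 1))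
    · intro xF xG _ h2
      have : xG ∈ LinearMap.range (matMap (GE (k + 1))) := by
        rw [← EG k]
        exact h2
      obtain ⟨yG, hyG⟩ := this
      exact ⟨yG, hyG⟩
    · intro yG
      have : matMap (GE (k + 1)) yG ∈ LinearMap.ker (matMap (GE k)) := by
        rw [EG k]
        exact ⟨yG, rfl⟩
      exact this
  refine ⟨fun k => resNumE m cF (k + 2) + resNumE r cG (k + 1),
    coneMat (FE 1) (Θ 1) (GE 0),
    fun k => coneMat (FE (k + 2)) (Θ (k + 2)) (GE (k + 1)), ?_, ?_, ?_, ?_, ?_⟩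
  · exact coneMat_isHomog (hFEdeg 1) (hΘP 1).1 (hGEdeg 0)
  · intro i
    exact coneMat_isHomog (hFEdeg (i + 2)) (hΘP (i + 2)).1 (hGEdeg (i + 1))
  · rw [← hbotker]
    exact EX0
  · exact EX1 0
  · intro i
    exact EX1 (i + 1)

end Cone

section Main
variable {K : Type*} [Field K] {n : ℕ}

theorem linRes_linear_forms : ∀ (r : ℕ) (u : Fin r → MvPolynomial (Fin n) K),
    (∀ t, (u t).IsHomogeneous 1) → LinearIndependent K u → LinRes u := by
  intro r
  induction r with
  | zero => intro u _ _; exact linRes_empty u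
  | succ r ih =>
    intro u hu hind
    have hind' : LinearIndependent K (u ∘ Fin.castSucc) :=
      hind.comp Fin.castSucc (Fin.castSucc_injective r)
    have hres : LinRes (u ∘ Fin.castSucc) := ih (u ∘ Fin.castSucc) (fun t => hu _) hind'
    apply linRes_cone (d := 1) u hu (u ∘ Fin.castSucc) (fun t => hu _) ?_ hres hres
    intro a
    constructor
    · exact colon_linear u hu hind a
    · intro ha
      exact Ideal.mul_mem_right _ _ ha

end Main

section TheMain
variable {K : Type*} [Field K] {n : ℕ}

theorem main_linRes {s d : ℕ} (f : Fin s → MvPolynomial (Fin n) K)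
    (hfhom : ∀ i, (f i).IsHomogeneous d)
    (hmin : ∀ i, f i ∉ Ideal.span (f '' {j | j ≠ i}))
    (hcolon : ∀ i : Fin s, 0 < (i : ℕ) →
      DegOneGen ((Ideal.span (f '' {j | (j : ℕ) < (i : ℕ)})).colon (Ideal.span {f i}))) :
    LinRes f := by
  have main : ∀ m (hm : m ≤ s), LinRes (fun j : Fin m => f (Fin.castLE hm j)) := by
    intro m
    induction m with
    | zero => intro hm; exact linRes_empty _
    | succ m ih =>
      intro hm
      have hm' : m ≤ s := Nat.le_of_succ_le hm
      rcases Nat.eq_zero_or_pos m with hm0 | hmpos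
      · subst hm0
        apply linRes_single
        intro hc
        exact hmin (Fin.castLE hm 0)
          (by rw [show f (Fin.castLE hm 0) = 0 from hc]; exact (Ideal.span _).zero_mem)
      · set i : Fin s := Fin.castLE hm (Fin.last m) with hi
        have hipos : 0 < (i : ℕ) := hmpos
        obtain ⟨r, u, hu1, huind, huspan⟩ := degOneGen_basis _ (hcolon i hipos)
        have hsetF : Set.range ((fun j : Fin (m + 1) => f (Fin.castLE hm j)) ∘ Fin.castSucc)
            = f '' {j : Fin s | (j : ℕ) < (i : ℕ)} := by
          ext x
          constructor
          · rintro ⟨j, rfl⟩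
            refine ⟨Fin.castLE hm (Fin.castSucc j), ?_, rfl⟩
            show ((Fin.castLE hm (Fin.castSucc j)) : ℕ) < (i : ℕ)
            simp [hi]
          · rintro ⟨j, hj, rfl⟩
            have hj' : (j : ℕ) < m := by simpa [hi] using hj
            refine ⟨⟨(j : ℕ), hj'⟩, ?_⟩
            show f (Fin.castLE hm (Fin.castSucc ⟨(j : ℕ), hj'⟩)) = f j
            congr 1
        have hspaneq : Ideal.span (Set.range
              ((fun j : Fin (m + 1) => f (Fin.castLE hm j)) ∘ Fin.castSucc))
            = Ideal.span (f '' {j : Fin s | (j : ℕ) < (i : ℕ)}) := by rw [hsetF]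
        apply linRes_cone (d := d) (fun j : Fin (m + 1) => f (Fin.castLE hm j))
          (fun j => hfhom _) u hu1 ?_ ?_ (linRes_linear_forms r u hu1 huind)
        · intro a
          rw [huspan, hspaneq]
          show a * f i ∈ _ ↔ _
          rw [Ideal.mem_colon_span_singleton]
        · have hcomp : (fun j : Fin (m + 1) => f (Fin.castLE hm j)) ∘ Fin.castSucc
              = fun j : Fin m => f (Fin.castLE hm' j) := by
            funext j
            show f (Fin.castLE hm (Fin.castSucc j)) = f (Fin.castLE hm' j)
            congr 1
          rw [hcomp]
          exact ih hm'
  have hfin := main s le_rfl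
  have heq : (fun j : Fin s => f (Fin.castLE le_rfl j)) = f := by
    funext j
    congr 1
  rwa [heq] at hfin

end TheMain

end LQLR

namespace LQLR

def glueNum (s : ℕ) (c : ℕ → ℕ) : ℕ → ℕ
  | 0 => s
  | (k+1) => c k

def glueMat {S : Type*} [CommRing S] {s : ℕ} {c : ℕ → ℕ}
    (A0 : Fin (c 0) → Fin s → S) (A : ∀ i, Fin (c (i+1)) → Fin (c i) → S) :
    ∀ i, Fin (glueNum s c (i + 1)) → Fin (glueNum s c i) → S
  | 0 => A0
  | (i+1) => A i

end LQLR

/-- A graded ideal generated in degree `d` with linear quotients has a linear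
resolution. -/
theorem linear_quotients_implies_linear_resolution {K : Type*} [Field K] {n : ℕ}
    (I : Ideal (MvPolynomial (Fin n) K)) (d : ℕ)
    (h : HasLinearQuotients I d) : HasLinearResolution I d := by
  obtain ⟨s, f, hfhom, hspan, hmin, hcolon⟩ := h
  obtain ⟨c, A0, A, hA0, hA, e0, e1, e⟩ := LQLR.main_linRes f hfhom hmin hcolon
  refine ⟨LQLR.glueNum s c, f, LQLR.glueMat A0 A, hfhom, ?_, hspan, e0, ?_⟩
  · intro i
    cases i with
    | zero => exact hA0
    | succ i => exact hA i
  · intro i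
    cases i with
    | zero => exact e1
    | succ i => exact e i
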